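/- Let F be a real normed vector space, u : ℂ → F a smooth map whose energy density e_u is Lebesgue-integrable on ℂ, and β a cutoff function. For r > −1 define u_r(z) = u((1+r)^{-1}z). Then: (a) for every r > −1, ∫_ℂ e_{u_r}(z) · β(|z|) dA(z) = ∫_ℂ e_u(z) · β((1+r)|z|) dA(z); and (b) the function r ↦ ∫_ℂ e_{u_r}(z) · β(|z|) dA(z) is differentiable at r = 0 with derivative ∫_ℂ e_u(z) · β′(|z|) · |z| dA(z). -/

import Mathlib

open MeasureTheory

/-- The (flat) energy density of a map `u : ℂ → F`: writing `z = s + it`,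
`e_u(z) = ‖∂u/∂s(z)‖² + ‖∂u/∂t(z)‖²`, expressed via the Fréchet derivative in the
directions `1` and `I`. -/
noncomputable def energyDensity {F : Type*} [NormedAddCommGroup F] [NormedSpace ℝ F]
    (u : ℂ → F) (z : ℂ) : ℝ :=
  ‖fderiv ℝ u z 1‖ ^ 2 + ‖fderiv ℝ u z Complex.I‖ ^ 2

lemma energyDensity_smul {F : Type*} [NormedAddCommGroup F] [NormedSpace ℝ F]
    (u : ℂ → F) (hu : ContDiff ℝ (⊤ : ℕ∞) u) (c : ℝ) (z : ℂ) :
    energyDensity (fun w : ℂ => u (c • w)) z = c ^ 2 * energyDensity u (c • z) := by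
  set L : ℂ →L[ℝ] ℂ := c • ContinuousLinearMap.id ℝ ℂ with hLdef
  have hL : HasFDerivAt (fun w : ℂ => c • w) L z := by
    exact (hasFDerivAt_id z).const_smul c
  have hcomp : HasFDerivAt (fun w : ℂ => u (c • w))
      ((fderiv ℝ u (c • z)).comp L) z :=
    ((hu.differentiable (by norm_num) (c • z)).hasFDerivAt).comp z hL
  have hfd := hcomp.fderiv
  have hap : ∀ v : ℂ, fderiv ℝ (fun w : ℂ => u (c • w)) z v
      = c • fderiv ℝ u (c • z) v := by
    intro v
    rw [hfd]
    simp [hLdef, _root_.map_smul]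
  simp only [energyDensity, hap, norm_smul, Real.norm_eq_abs]
  rw [mul_pow, mul_pow, sq_abs]
  ring

lemma energyDensity_nonneg {F : Type*} [NormedAddCommGroup F] [NormedSpace ℝ F]
    (u : ℂ → F) (z : ℂ) : 0 ≤ energyDensity u z :=
  add_nonneg (sq_nonneg _) (sq_nonneg _)

lemma energyDensity_continuous {F : Type*} [NormedAddCommGroup F] [NormedSpace ℝ F]
    (u : ℂ → F) (hu : ContDiff ℝ (⊤ : ℕ∞) u) : Continuous (energyDensity u) := by
  have h := hu.continuous_fderiv (by norm_num)
  apply Continuous.add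
  · exact (((ContinuousLinearMap.apply ℝ F (1:ℂ)).continuous.comp h).norm.pow 2)
  · exact (((ContinuousLinearMap.apply ℝ F Complex.I).continuous.comp h).norm.pow 2)

-- deriv β vanishes outside Icc 1 2
lemma deriv_zero_outside (β : ℝ → ℝ)
    (hβ0 : ∀ t : ℝ, t ≤ 1 → β t = 0) (hβ1 : ∀ t : ℝ, 2 ≤ t → β t = 1)
    {t : ℝ} (ht : t ∉ Set.Icc (1:ℝ) 2) : deriv β t = 0 := by
  rw [Set.mem_Icc, not_and_or, not_le, not_le] at ht
  rcases ht with ht | ht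
  · have hev : β =ᶠ[nhds t] fun _ => (0:ℝ) := by
      filter_upwards [Iio_mem_nhds ht] with s hs
      exact hβ0 s (le_of_lt hs)
    rw [hev.deriv_eq, deriv_const]
  · have hev : β =ᶠ[nhds t] fun _ => (1:ℝ) := by
      filter_upwards [Ioi_mem_nhds ht] with s hs
      exact hβ1 s (le_of_lt hs)
    rw [hev.deriv_eq, deriv_const]

lemma part_a {F : Type*} [NormedAddCommGroup F] [NormedSpace ℝ F]
    (u : ℂ → F) (hu : ContDiff ℝ (⊤ : ℕ∞) u) (β : ℝ → ℝ) (r : ℝ) (hr : -1 < r) :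
      (∫ z : ℂ, energyDensity (fun w : ℂ => u (((1 + r)⁻¹ : ℝ) • w)) z * β (‖z‖))
        = ∫ z : ℂ, energyDensity u z * β ((1 + r) * ‖z‖) := by
  have h1r : (0:ℝ) < 1 + r := by linarith
  set c : ℝ := (1 + r)⁻¹ with hc
  have hcpos : 0 < c := inv_pos.2 h1r
  have habs : ∀ z : ℂ, ‖z‖ = (1 + r) * ‖c • z‖ := by
    intro z
    have : ‖c • z‖ = c * ‖z‖ := by
      rw [norm_smul, Real.norm_eq_abs,
        abs_of_pos hcpos]
    rw [this, ← mul_assoc, mul_inv_cancel₀ h1r.ne', one_mul]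
  have hpt : ∀ z : ℂ, energyDensity (fun w : ℂ => u (c • w)) z * β (‖z‖)
      = (fun w : ℂ => c ^ 2 * (energyDensity u w * β ((1 + r) * ‖w‖))) (c • z) := by
    intro z
    rw [energyDensity_smul u hu c z, habs z, mul_assoc]
  calc (∫ z : ℂ, energyDensity (fun w : ℂ => u (c • w)) z * β (‖z‖))
      = ∫ z : ℂ, (fun w : ℂ => c ^ 2 * (energyDensity u w * β ((1 + r) * ‖w‖))) (c • z) := by
        simp_rw [hpt]
    _ = |(c ^ Module.finrank ℝ ℂ)⁻¹| • ∫ w : ℂ, c ^ 2 * (energyDensity u w * β ((1 + r) * ‖w‖)) :=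
        Measure.integral_comp_smul volume (fun w : ℂ => c ^ 2 * (energyDensity u w * β ((1 + r) * ‖w‖))) c
    _ = ∫ z : ℂ, energyDensity u z * β ((1 + r) * ‖z‖) := by
        rw [integral_const_mul, Complex.finrank_real_complex, smul_eq_mul,
          abs_of_pos (by positivity), ← mul_assoc, inv_mul_cancel₀ (by positivity), one_mul]

lemma part_b_core {F : Type*} [NormedAddCommGroup F] [NormedSpace ℝ F]
    (u : ℂ → F) (hu : ContDiff ℝ (⊤ : ℕ∞) u)
    (hint : Integrable (fun z : ℂ => energyDensity u z))
    (β : ℝ → ℝ) (hβ : ContDiff ℝ (⊤ : ℕ∞) β)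
    (hβ01 : ∀ t : ℝ, β t ∈ Set.Icc (0 : ℝ) 1)
    (hβ0 : ∀ t : ℝ, t ≤ 1 → β t = 0)
    (hβ1 : ∀ t : ℝ, 2 ≤ t → β t = 1) :
    HasDerivAt (fun r : ℝ => ∫ z : ℂ, energyDensity u z * β ((1 + r) * ‖z‖))
      (∫ z : ℂ, energyDensity u z * (deriv β (‖z‖) * ‖z‖)) 0 := by
  have hβd : Differentiable ℝ β := hβ.differentiable (by norm_num)
  have hβdc : Continuous (deriv β) := hβ.continuous_deriv (by norm_num)
  -- bound on deriv β on Icc 1 2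
  obtain ⟨C, hC⟩ : ∃ C : ℝ, ∀ t : ℝ, |deriv β t| ≤ C := by
    obtain ⟨C, hC⟩ := (isCompact_Icc (a := (1:ℝ)) (b := 2)).exists_bound_of_continuousOn
      (hβdc.continuousOn)
    refine ⟨C, fun t => ?_⟩
    by_cases ht : t ∈ Set.Icc (1:ℝ) 2
    · simpa [Real.norm_eq_abs] using hC t ht
    · rw [deriv_zero_outside β hβ0 hβ1 ht, abs_zero]
      simpa [Real.norm_eq_abs] using (abs_nonneg _).trans (hC 1 (by norm_num))
  have hCnn : 0 ≤ C := (abs_nonneg _).trans (hC 0)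
  set eu := energyDensity u with heu
  have heuc := energyDensity_continuous u hu
  set Fn : ℝ → ℂ → ℝ := fun x z => eu z * β ((1 + x) * ‖z‖) with hFn
  set Fn' : ℝ → ℂ → ℝ := fun x z => eu z * (deriv β ((1 + x) * ‖z‖) * ‖z‖)
    with hFn'
  have hFnc : ∀ x : ℝ, Continuous (Fn x) := fun x =>
    heuc.mul (hβ.continuous.comp (continuous_const.mul continuous_norm))
  have hFn'c : ∀ x : ℝ, Continuous (Fn' x) := fun x =>
    heuc.mul ((hβdc.comp (continuous_const.mul continuous_norm)).mul
      continuous_norm)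
  have h_bound : ∀ᵐ z : ℂ ∂volume, ∀ x ∈ Metric.ball (0:ℝ) (1/2),
      ‖Fn' x z‖ ≤ eu z * (4 * C) := by
    filter_upwards with z x hx
    rw [Metric.mem_ball, Real.dist_0_eq_abs] at hx
    have hx1 : (1:ℝ)/2 < 1 + x := by cases abs_lt.1 hx; linarith
    have hkey : |deriv β ((1 + x) * ‖z‖) * ‖z‖| ≤ 4 * C := by
      by_cases hz : (1 + x) * ‖z‖ ∈ Set.Icc (1:ℝ) 2
      · have hzle : ‖z‖ ≤ 4 := by
          rcases hz with ⟨_, h2⟩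
          nlinarith [norm_nonneg z]
        rw [abs_mul, abs_of_nonneg (norm_nonneg z)]
        calc |deriv β ((1 + x) * ‖z‖)| * ‖z‖
            ≤ C * 4 := mul_le_mul (hC _) hzle (norm_nonneg z) hCnn
          _ = 4 * C := by ring
      · rw [deriv_zero_outside β hβ0 hβ1 hz, zero_mul, abs_zero]
        positivity
    calc ‖Fn' x z‖ = eu z * |deriv β ((1 + x) * ‖z‖) * ‖z‖| := by
          rw [Real.norm_eq_abs, abs_mul, abs_of_nonneg (energyDensity_nonneg u z)]
      _ ≤ eu z * (4 * C) := mul_le_mul_of_nonneg_left hkey (energyDensity_nonneg u z)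
  have h_diff : ∀ᵐ z : ℂ ∂volume, ∀ x ∈ Metric.ball (0:ℝ) (1/2),
      HasDerivAt (fun x => Fn x z) (Fn' x z) x := by
    filter_upwards with z x _
    have hinner : HasDerivAt (fun x : ℝ => (1 + x) * ‖z‖) (‖z‖) x := by
      simpa using ((hasDerivAt_id x).const_add (1:ℝ)).mul_const (‖z‖)
    have houter : HasDerivAt β (deriv β ((1 + x) * ‖z‖)) ((1 + x) * ‖z‖) :=
      (hβd _).hasDerivAt
    exact (houter.comp x hinner).const_mul (eu z)
  have hFint : Integrable (Fn 0) volume := by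
    refine hint.mono ((hFnc 0).aestronglyMeasurable) ?_
    filter_upwards with z
    simp only [Real.norm_eq_abs, hFn, abs_mul, abs_of_nonneg (energyDensity_nonneg u z),
      abs_of_nonneg (hβ01 ((1 + 0) * ‖z‖)).1]
    exact mul_le_of_le_one_right (abs_nonneg _) (hβ01 _).2
  have key := hasDerivAt_integral_of_dominated_loc_of_deriv_le (μ := volume)
    (F := Fn) (F' := Fn') (x₀ := 0) (bound := fun z => eu z * (4 * C))
    (Metric.ball_mem_nhds _ (by norm_num))
    (Filter.Eventually.of_forall fun x => (hFnc x).aestronglyMeasurable)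
    hFint
    ((hFn'c 0).aestronglyMeasurable)
    h_bound
    (hint.mul_const (4 * C))
    h_diff
  have h2 := key.2
  have hconv : (∫ a : ℂ, Fn' 0 a) = ∫ z : ℂ, eu z * (deriv β (‖z‖) * ‖z‖) := by
    congr 1
    funext z
    simp [hFn']
  rw [hconv] at h2
  exact h2

/-- Let `u : ℂ → F` be a smooth map with Lebesgue-integrable energy density,
and let `β` be a cutoff function.  For `r > -1` set `u_r(z) = u((1+r)⁻¹ z)`.  Then
(a) `∫_ℂ e_{u_r}(z) β(|z|) dA = ∫_ℂ e_u(z) β((1+r)|z|) dA` for every `r > -1`, and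
(b) `r ↦ ∫_ℂ e_{u_r}(z) β(|z|) dA` is differentiable at `r = 0` with derivative
`∫_ℂ e_u(z) β'(|z|) |z| dA`. -/
theorem stmt_7 {F : Type*} [NormedAddCommGroup F] [NormedSpace ℝ F]
    (u : ℂ → F) (hu : ContDiff ℝ (⊤ : ℕ∞) u)
    (hint : Integrable (fun z : ℂ => energyDensity u z))
    (β : ℝ → ℝ) (hβ : ContDiff ℝ (⊤ : ℕ∞) β)
    (hβ01 : ∀ t : ℝ, β t ∈ Set.Icc (0 : ℝ) 1)
    (hβ0 : ∀ t : ℝ, t ≤ 1 → β t = 0)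
    (hβ1 : ∀ t : ℝ, 2 ≤ t → β t = 1)
    (hβ' : ∀ t ∈ Set.Ioo (1 : ℝ) 2, 0 < deriv β t) :
    (∀ r : ℝ, -1 < r →
      (∫ z : ℂ, energyDensity (fun w : ℂ => u (((1 + r)⁻¹ : ℝ) • w)) z * β (‖z‖))
        = ∫ z : ℂ, energyDensity u z * β ((1 + r) * ‖z‖)) ∧
    HasDerivAt
      (fun r : ℝ =>
        ∫ z : ℂ, energyDensity (fun w : ℂ => u (((1 + r)⁻¹ : ℝ) • w)) z * β (‖z‖))
      (∫ z : ℂ, energyDensity u z * (deriv β (‖z‖) * ‖z‖)) 0 := by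
  refine ⟨fun r hr => part_a u hu β r hr, ?_⟩
  have hev : (fun r : ℝ =>
        ∫ z : ℂ, energyDensity (fun w : ℂ => u (((1 + r)⁻¹ : ℝ) • w)) z * β (‖z‖))
      =ᶠ[nhds (0:ℝ)]
      (fun r : ℝ => ∫ z : ℂ, energyDensity u z * β ((1 + r) * ‖z‖)) := by
    filter_upwards [Ioi_mem_nhds (show (-1:ℝ) < 0 by norm_num)] with r hr
    exact part_a u hu β r hr
  exact (part_b_core u hu hint β hβ hβ01 hβ0 hβ1).congr_of_eventuallyEq hev
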